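/- If Y-bar = sum_{i=1}^k f(X_i) + sum_{i=1}^k N_i where the N_i are integrable random variables independent of (X_1,...,X_k), and Y-bar can also be written as Y-bar = g(X-bar) + N with X-bar = sum_{i=1}^k X_i and N integrable and independent of X-bar, then g(T) = E[sum_{i=1}^k f(X_i) | X-bar = T] + c almost surely for some constant c. -/

import Mathlib

open MeasureTheory ProbabilityTheory

/-- If `Ybar = ∑ f (X i) + ∑ N i` with the noises `N` (jointly) independent of
the vector `X`, and also `Ybar = g ∘ Xbar + N'` with `N'` integrable and independent of
`Xbar = ∑ X i`, then `g(T) = E[∑ f(X i) | Xbar = T] + c` almost surely, where the constant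
`c` equals `E[∑ N i] - E[N']`. -/
theorem stmt0 {Ω : Type*} [MeasurableSpace Ω] (μ : Measure Ω) [IsProbabilityMeasure μ]
    (k : ℕ) (X N : Fin k → Ω → ℝ) (f g : ℝ → ℝ) (Ybar N' : Ω → ℝ)
    (hXmeas : ∀ i, Measurable (X i)) (hNmeas : ∀ i, Measurable (N i))
    (hgmeas : Measurable g) (hN'meas : Measurable N')
    (hfXint : ∀ i, Integrable (fun ω => f (X i ω)) μ)
    (hNint : ∀ i, Integrable (N i) μ) (hN'int : Integrable N' μ)
    (hindep : IndepFun (fun ω => (fun i => N i ω)) (fun ω => (fun i => X i ω)) μ)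
    (hindep' : IndepFun N' (fun ω => ∑ i, X i ω) μ)
    (hY1 : ∀ ω, Ybar ω = (∑ i, f (X i ω)) + ∑ i, N i ω)
    (hY2 : ∀ ω, Ybar ω = g (∑ i, X i ω) + N' ω) :
    (fun ω => g (∑ i, X i ω)) =ᵐ[μ]
      (fun ω =>
        (μ[(fun ω' => ∑ i, f (X i ω')) |
          MeasurableSpace.comap (fun ω' => ∑ i, X i ω') Real.measurableSpace]) ω
        + ((∫ ω', ∑ i, N i ω' ∂μ) - ∫ ω', N' ω' ∂μ)) := by
  set Xbar : Ω → ℝ := fun ω => ∑ i, X i ω with hXbar_def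
  have hXbarmeas : Measurable Xbar := by
    apply Finset.measurable_sum
    exact fun i _ => hXmeas i
  have hm : MeasurableSpace.comap Xbar Real.measurableSpace ≤ _ := hXbarmeas.comap_le
  set m : MeasurableSpace Ω := MeasurableSpace.comap Xbar Real.measurableSpace with hm_def
  have hSNint : Integrable (fun ω => ∑ i, N i ω) μ := integrable_finset_sum _ fun i _ => hNint i
  have hSfint : Integrable (fun ω => ∑ i, f (X i ω)) μ :=
    integrable_finset_sum _ fun i _ => hfXint i
  have hYint : Integrable Ybar μ := by
    have : Ybar = fun ω => (∑ i, f (X i ω)) + ∑ i, N i ω := funext hY1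
    rw [this]; exact hSfint.add hSNint
  have hgXint : Integrable (fun ω => g (Xbar ω)) μ := by
    have : (fun ω => g (Xbar ω)) = fun ω => Ybar ω - N' ω := by
      funext ω; rw [hY2 ω]; ring
    rw [this]; exact hYint.sub hN'int
  -- independence of ∑ N i and Xbar
  have hindepSN : IndepFun (fun ω => ∑ i, N i ω) Xbar μ := by
    have := hindep.comp (φ := fun v : Fin k → ℝ => ∑ i, v i)
      (ψ := fun v : Fin k → ℝ => ∑ i, v i)
      (Finset.measurable_sum _ fun i _ => measurable_pi_apply i)
      (Finset.measurable_sum _ fun i _ => measurable_pi_apply i)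
    exact this
  -- condexp of independent noises are constants
  have hcSN : μ[(fun ω => ∑ i, N i ω)|m] =ᵐ[μ] fun _ => ∫ ω', ∑ i, N i ω' ∂μ := by
    exact condExp_indep_eq ((Finset.measurable_sum _ fun i _ => hNmeas i).comap_le) hm
      (Measurable.stronglyMeasurable (measurable_iff_comap_le.2 le_rfl))
      hindepSN
  have hcN' : μ[N'|m] =ᵐ[μ] fun _ => ∫ ω', N' ω' ∂μ := by
    exact condExp_indep_eq hN'meas.comap_le hm
      (Measurable.stronglyMeasurable (measurable_iff_comap_le.2 le_rfl))
      hindep'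
  -- g ∘ Xbar is m-measurable
  have hgXm : StronglyMeasurable[m] (fun ω => g (Xbar ω)) := by
    have hXbarm : Measurable[m] Xbar := measurable_iff_comap_le.2 le_rfl
    exact (hgmeas.comp hXbarm).stronglyMeasurable
  have hcgX : μ[(fun ω => g (Xbar ω))|m] = fun ω => g (Xbar ω) :=
    condExp_of_stronglyMeasurable (μ := μ) hm hgXm hgXint
  -- two expressions for μ[Ybar|m]
  have h1 : μ[Ybar|m] =ᵐ[μ]
      (μ[(fun ω => ∑ i, f (X i ω))|m]) + μ[(fun ω => ∑ i, N i ω)|m] := by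
    have : Ybar = (fun ω => ∑ i, f (X i ω)) + fun ω => ∑ i, N i ω := funext hY1
    rw [this]; exact condExp_add hSfint hSNint m
  have h2 : μ[Ybar|m] =ᵐ[μ] (μ[(fun ω => g (Xbar ω))|m]) + μ[N'|m] := by
    have : Ybar = (fun ω => g (Xbar ω)) + N' := funext hY2
    rw [this]; exact condExp_add hgXint hN'int m
  filter_upwards [hcSN, hcN', h1, h2] with ω hSN hN'c hh1 hh2
  have := hh1.symm.trans hh2
  simp only [Pi.add_apply] at this
  rw [hSN, hN'c, hcgX] at this
  simp only at this ⊢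
  linarith
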